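/- Let P be a finite nonempty collection of cells and let [a,b] and [α,β] be inner intervals of P with a=(i,j), b=(k,l), c=(i,l), d=(k,j), γ=b and α=(k,n)∈]d,b[ (so j<n<l, β=(p,l) with p>k and δ=(p,n)); set h=(i,n) and r=(p,j). Let <^P be a P-order such that gcd(in(f_{a,b}), in(f_{α,β}))≠1. Then S(f_{a,b},f_{α,β}) reduces to 0 modulo G with respect to <^P_lex if and only if one of the following holds: (1) x_a x_α x_β <^P_lex x_δ x_c x_d, and either both h <^P c and β <^P c, or both h <^P δ and β <^P δ; (2) x_a x_α x_β <^P_lex x_δ x_c x_d, the set {d,δ,α,r} is the vertex set of an inner interval of P, and either both r <^P δ and α <^P δ, or both r <^P d and α <^P d; (3) x_δ x_c x_d <^P_lex x_a x_α x_β, and either both h <^P a and d <^P a, or both h <^P α and d <^P α; (4) x_δ x_c x_d <^P_lex x_a x_α x_β, the set {d,δ,α,r} is the vertex set of an inner interval of P, and either both r <^P a and c <^P a, or both r <^P β and c <^P β. -/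

import Mathlib

namespace ClosedPathPaper

open MvPolynomial

/-- Lattice points of `ℤ²`; a cell is identified with its lower left corner. -/
abbrev Pt : Type := ℤ × ℤ

/-- The four vertices (corners) of the unit cell with lower left corner `a`. -/
def cellVerts (a : Pt) : Set Pt :=
  {a, (a.1 + 1, a.2), (a.1, a.2 + 1), (a.1 + 1, a.2 + 1)}

/-- The vertex set `V(P)` of a collection of cells `P`. -/
def VP (P : Finset Pt) : Set Pt := ⋃ a ∈ P, cellVerts a

/-- `[a,b]` is a proper interval and every cell contained in it belongs to `P`. -/
def IsInnerInterval (P : Finset Pt) (a b : Pt) : Prop :=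
  a.1 < b.1 ∧ a.2 < b.2 ∧
    ∀ c : Pt, a.1 ≤ c.1 → c.1 < b.1 → a.2 ≤ c.2 → c.2 < b.2 → c ∈ P

/-- The four corners of the proper interval `[a,b]`:
diagonal corners `a, b` and anti-diagonal corners `c = (a.1, b.2)`, `d = (b.1, a.2)`. -/
def cornersOf (a b : Pt) : Finset Pt := {a, b, (a.1, b.2), (b.1, a.2)}

/-- The inner 2-minor `f_{a,b} = x_a x_b - x_c x_d` attached to the inner interval `[a,b]`. -/
noncomputable def innerMinor (K : Type*) [Field K] (a b : Pt) : MvPolynomial Pt K :=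
  X a * X b - X (a.1, b.2) * X (b.1, a.2)

/-- The set `G` of all inner 2-minors of `P`. -/
def minorsSet (K : Type*) [Field K] (P : Finset Pt) : Set (MvPolynomial Pt K) :=
  {f | ∃ a b : Pt, IsInnerInterval P a b ∧ f = innerMinor K a b}

/-- The polyomino ideal `I_P`. -/
noncomputable def polyoIdeal (K : Type*) [Field K] (P : Finset Pt) :
    Ideal (MvPolynomial Pt K) :=
  Ideal.span (minorsSet K P)

/-! ### Monomial orders -/

/-- Strict lexicographic comparison of exponent vectors induced by the
(strict total) order `po` on the variables. -/
def lexLt (po : Pt → Pt → Prop) (u v : Pt →₀ ℕ) : Prop :=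
  ∃ w : Pt, u w < v w ∧ ∀ w' : Pt, po w w' → u w' = v w'

def lexLe (po : Pt → Pt → Prop) (u v : Pt →₀ ℕ) : Prop := u = v ∨ lexLt po u v

/-- `m` is the leading monomial of `f` with respect to the lexicographic order
induced by `po`. -/
def IsLM {K : Type*} [Field K] (po : Pt → Pt → Prop) (f : MvPolynomial Pt K)
    (m : Pt →₀ ℕ) : Prop :=
  m ∈ f.support ∧ ∀ m' ∈ f.support, lexLe po m' m

/-- `sp` is the S-polynomial of `f` and `g` with respect to the lexicographic
order induced by `po`. -/
def IsSPoly {K : Type*} [Field K] (po : Pt → Pt → Prop) (f g sp : MvPolynomial Pt K) : Prop :=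
  ∃ mf mg : Pt →₀ ℕ, IsLM po f mf ∧ IsLM po g mg ∧
    sp = monomial (mf ⊔ mg - mf) (f.coeff mf)⁻¹ * f
       - monomial (mf ⊔ mg - mg) (g.coeff mg)⁻¹ * g

/-- `h` has a standard expression with respect to `G`, i.e. `h` reduces to `0`
modulo `G` with respect to the lexicographic order induced by `po`. -/
def ReducesToZero {K : Type*} [Field K] (po : Pt → Pt → Prop)
    (G : Set (MvPolynomial Pt K)) (h : MvPolynomial Pt K) : Prop :=
  ∃ (F : Finset (MvPolynomial Pt K)) (q : MvPolynomial Pt K → MvPolynomial Pt K),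
    ↑F ⊆ G ∧ h = ∑ g ∈ F, q g * g ∧
    ∀ g ∈ F, ∀ m, IsLM po (q g * g) m → ∃ mh, IsLM po h mh ∧ lexLe po m mh

/-- The exponent vector of `x_u x_v x_w`. -/
noncomputable def mono3 (u v w : Pt) : Pt →₀ ℕ :=
  Finsupp.single u 1 + Finsupp.single v 1 + Finsupp.single w 1

/-- The leading monomials, viewed as polynomials, of the members of `G`. -/
def leadingMonomials {K : Type*} [Field K] (po : Pt → Pt → Prop)
    (G : Set (MvPolynomial Pt K)) : Set (MvPolynomial Pt K) :=
  {f | ∃ g ∈ G, ∃ m, IsLM po g m ∧ f = monomial m (1 : K)}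

/-- The initial ideal of `I` with respect to the lexicographic order induced by `po`. -/
noncomputable def initialIdeal {K : Type*} [Field K] (po : Pt → Pt → Prop)
    (I : Ideal (MvPolynomial Pt K)) : Ideal (MvPolynomial Pt K) :=
  Ideal.span (leadingMonomials po (I : Set (MvPolynomial Pt K)))

/-- `G` is a Gröbner basis of `I`. -/
def IsGroebnerBasis {K : Type*} [Field K] (po : Pt → Pt → Prop)
    (G : Set (MvPolynomial Pt K)) (I : Ideal (MvPolynomial Pt K)) : Prop :=
  Ideal.span G = I ∧ Ideal.span (leadingMonomials po G) = initialIdeal po I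

/-- `G` is the reduced Gröbner basis of `I` (up to normalizing signs). -/
def IsReducedGroebnerBasis {K : Type*} [Field K] (po : Pt → Pt → Prop)
    (G : Set (MvPolynomial Pt K)) (I : Ideal (MvPolynomial Pt K)) : Prop :=
  IsGroebnerBasis po G I ∧
  (∀ g ∈ G, ∃ m, IsLM po g m ∧ (g.coeff m = 1 ∨ g.coeff m = -1)) ∧
  (∀ g ∈ G, ∀ g' ∈ G, g' ≠ g → ∀ m ∈ g.support, ∀ m', IsLM po g' m' → ¬ m' ≤ m)

/-! ### Closed paths and special configurations -/

/-- Two cells share a common edge. -/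
def cellAdj (a b : Pt) : Prop :=
  b = (a.1 + 1, a.2) ∨ b = (a.1 - 1, a.2) ∨ b = (a.1, a.2 + 1) ∨ b = (a.1, a.2 - 1)

/-- `P` is a closed path polyomino. -/
def IsClosedPath (P : Finset Pt) : Prop :=
  ∃ n : ℕ, 5 < n ∧ ∃ A : ZMod n → Pt,
    Function.Injective A ∧
    (∀ i, cellAdj (A i) (A (i + 1))) ∧
    (∀ i j : ZMod n, j ≠ i - 2 → j ≠ i - 1 → j ≠ i → j ≠ i + 1 → j ≠ i + 2 →
      cellVerts (A i) ∩ cellVerts (A j) = ∅) ∧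
    ∀ c : Pt, c ∈ P ↔ ∃ i, A i = c

/-- The horizontal block of rank `m` whose leftmost cell is `a`. -/
def hBlockCells (a : Pt) (m : ℕ) : Finset Pt :=
  (Finset.range m).image fun t : ℕ => (a.1 + (t : ℤ), a.2)

/-- The vertical block of rank `m` whose bottom cell is `a`. -/
def vBlockCells (a : Pt) (m : ℕ) : Finset Pt :=
  (Finset.range m).image fun t : ℕ => (a.1, a.2 + (t : ℤ))

/-- The vertex set of a finite set of cells. -/
def vertsOfCells (s : Finset Pt) : Set Pt := ⋃ c ∈ s, cellVerts c

/-- A W-pentomino of `P`: a horizontal block of rank two with leftmost cell `a₁`, a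
vertical block of rank two with bottom cell `a₂`, and a middle cell `A` not belonging to the
two blocks, such that the vertex sets of the two blocks meet exactly in the lower right
corner of `A`. -/
def IsWPentomino (P : Finset Pt) (a₁ a₂ A : Pt) : Prop :=
  hBlockCells a₁ 2 ⊆ P ∧ vBlockCells a₂ 2 ⊆ P ∧ A ∈ P ∧
  A ∉ hBlockCells a₁ 2 ∪ vBlockCells a₂ 2 ∧
  vertsOfCells (hBlockCells a₁ 2) ∩ vertsOfCells (vBlockCells a₂ 2) = {(A.1 + 1, A.2)}

/-- An RW-heptomino of `P`: a horizontal block of rank three with leftmost cell `a₁`, a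
vertical block of rank three with bottom cell `a₂`, and a middle cell `A` not belonging to
the two blocks, such that the vertex sets of the two blocks meet exactly in the upper left
corner of `A`. -/
def IsRWHeptomino (P : Finset Pt) (a₁ a₂ A : Pt) : Prop :=
  hBlockCells a₁ 3 ⊆ P ∧ vBlockCells a₂ 3 ⊆ P ∧ A ∈ P ∧
  A ∉ hBlockCells a₁ 3 ∪ vBlockCells a₂ 3 ∧
  vertsOfCells (hBlockCells a₁ 3) ∩ vertsOfCells (vBlockCells a₂ 3) = {(A.1, A.2 + 1)}

/-- An LD-horizontal skew tetromino of `P` (base point `p`): the cells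
`p, p+(1,0), p+(1,1), p+(2,1)`. -/
def IsLDhTetromino (P : Finset Pt) (p : Pt) : Prop :=
  p ∈ P ∧ (p.1 + 1, p.2) ∈ P ∧ (p.1 + 1, p.2 + 1) ∈ P ∧ (p.1 + 2, p.2 + 1) ∈ P

/-- An LD-vertical skew tetromino of `P` (base point `p`): the cells
`p, p+(0,1), p+(1,1), p+(1,2)`. -/
def IsLDvTetromino (P : Finset Pt) (p : Pt) : Prop :=
  p ∈ P ∧ (p.1, p.2 + 1) ∈ P ∧ (p.1 + 1, p.2 + 1) ∈ P ∧ (p.1 + 1, p.2 + 2) ∈ P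

/-- An LD-horizontal skew hexomino of `P` (base point `p`): the cells
`p, p+(1,0), p+(2,0), p+(2,1), p+(3,1), p+(4,1)`. -/
def IsLDhHexomino (P : Finset Pt) (p : Pt) : Prop :=
  p ∈ P ∧ (p.1 + 1, p.2) ∈ P ∧ (p.1 + 2, p.2) ∈ P ∧
  (p.1 + 2, p.2 + 1) ∈ P ∧ (p.1 + 3, p.2 + 1) ∈ P ∧ (p.1 + 4, p.2 + 1) ∈ P

/-- An LD-vertical skew hexomino of `P` (base point `p`): the cells
`p, p+(0,1), p+(0,2), p+(1,2), p+(1,3), p+(1,4)`. -/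
def IsLDvHexomino (P : Finset Pt) (p : Pt) : Prop :=
  p ∈ P ∧ (p.1, p.2 + 1) ∈ P ∧ (p.1, p.2 + 2) ∈ P ∧
  (p.1 + 1, p.2 + 2) ∈ P ∧ (p.1 + 1, p.2 + 3) ∈ P ∧ (p.1 + 1, p.2 + 4) ∈ P

/-- The total order `<¹` on `ℤ²`. -/
def lt1 (a b : Pt) : Prop := a.1 < b.1 ∨ (a.1 = b.1 ∧ a.2 < b.2)

/-- The P-order `<^Y` attached to a set `Y` of vertices. -/
def Ylt (Y : Set Pt) (a b : Pt) : Prop :=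
  (a ∉ Y ∧ b ∈ Y) ∨ (a ∉ Y ∧ b ∉ Y ∧ lt1 a b) ∨ (a ∈ Y ∧ b ∈ Y ∧ lt1 a b)


section Infra
variable {po : Pt → Pt → Prop}

lemma lexLt_irrefl (u : Pt →₀ ℕ) : ¬ lexLt po u u := by
  rintro ⟨w, hw, -⟩; exact lt_irrefl _ hw

lemma lexLt_asymm (hpo : IsStrictTotalOrder Pt po) {u v : Pt →₀ ℕ}
    (h1 : lexLt po u v) (h2 : lexLt po v u) : False := by
  haveI := hpo
  obtain ⟨w1, hw1, he1⟩ := h1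
  obtain ⟨w2, hw2, he2⟩ := h2
  rcases trichotomous_of po w1 w2 with h | h | h
  · have := he1 w2 h; omega
  · subst h; omega
  · have := he2 w1 h; omega

lemma lexLt_trans (hpo : IsStrictTotalOrder Pt po) {u v t : Pt →₀ ℕ}
    (h1 : lexLt po u v) (h2 : lexLt po v t) : lexLt po u t := by
  haveI := hpo
  obtain ⟨w1, hw1, he1⟩ := h1
  obtain ⟨w2, hw2, he2⟩ := h2
  rcases trichotomous_of po w1 w2 with h | h | h
  · exact ⟨w2, by have := he1 w2 h; omega,
      fun w' hw' => (he1 w' (Trans.trans h hw')).trans (he2 w' hw')⟩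
  · subst h
    exact ⟨w1, by omega, fun w' hw' => (he1 w' hw').trans (he2 w' hw')⟩
  · exact ⟨w1, by have := he2 w1 h; omega,
      fun w' hw' => (he1 w' hw').trans (he2 w' (Trans.trans h hw'))⟩

lemma exists_po_max (hpo : IsStrictTotalOrder Pt po) :
    ∀ s : Finset Pt, s.Nonempty → ∃ w ∈ s, ∀ w' ∈ s, w' ≠ w → po w' w := by
  haveI := hpo
  intro s
  induction s using Finset.induction_on with
  | empty => rintro ⟨x, hx⟩; simp at hx
  | @insert a s ha ih =>
    intro _
    rcases s.eq_empty_or_nonempty with rfl | hs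
    · exact ⟨a, by simp, by simp⟩
    · obtain ⟨w, hw, hmax⟩ := ih hs
      have haw : a ≠ w := fun h => ha (h ▸ hw)
      rcases trichotomous_of po a w with h | h | h
      · refine ⟨w, Finset.mem_insert_of_mem hw, ?_⟩
        intro w' hw' hne
        rcases Finset.mem_insert.1 hw' with rfl | hw'
        · exact h
        · exact hmax w' hw' hne
      · exact absurd h haw
      · refine ⟨a, Finset.mem_insert_self a s, ?_⟩
        intro w' hw' hne
        rcases Finset.mem_insert.1 hw' with rfl | hw'
        · exact absurd rfl hne
        · rcases eq_or_ne w' w with rfl | hne'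
          · exact h
          · exact Trans.trans (hmax w' hw' hne') h

lemma lexLt_trichotomy (hpo : IsStrictTotalOrder Pt po) {u v : Pt →₀ ℕ}
    (h : u ≠ v) : lexLt po u v ∨ lexLt po v u := by
  haveI := hpo
  have hD : ((u.support ∪ v.support).filter (fun w => u w ≠ v w)).Nonempty := by
    have : ∃ w, u w ≠ v w := by
      by_contra hc; push_neg at hc; exact h (Finsupp.ext hc)
    obtain ⟨w, hw⟩ := this
    refine ⟨w, Finset.mem_filter.2 ⟨Finset.mem_union.2 ?_, hw⟩⟩
    by_cases h0 : u w = 0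
    · exact Or.inr (Finsupp.mem_support_iff.2 (by omega))
    · exact Or.inl (Finsupp.mem_support_iff.2 h0)
  set D := (u.support ∪ v.support).filter (fun w => u w ≠ v w) with hDdef
  obtain ⟨w, hwD, hmax⟩ := exists_po_max hpo D hD
  have hne : u w ≠ v w := (Finset.mem_filter.1 hwD).2
  have heq : ∀ w', po w w' → u w' = v w' := by
    intro w' hw'
    by_contra hc
    have hw'D : w' ∈ D := by
      refine Finset.mem_filter.2 ⟨Finset.mem_union.2 ?_, hc⟩
      by_cases h0 : u w' = 0
      · exact Or.inr (Finsupp.mem_support_iff.2 (by omega))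
      · exact Or.inl (Finsupp.mem_support_iff.2 h0)
    have hww' : w' ≠ w := by rintro rfl; exact (irrefl_of po w') hw'
    exact asymm_of po hw' (hmax w' hw'D hww')
  rcases lt_trichotomy (u w) (v w) with h' | h' | h'
  · exact Or.inl ⟨w, h', heq⟩
  · exact absurd h' hne
  · exact Or.inr ⟨w, h', fun w' hw' => (heq w' hw').symm⟩

lemma lexLt_add_right {u v : Pt →₀ ℕ} (e : Pt →₀ ℕ) (h : lexLt po u v) :
    lexLt po (u + e) (v + e) := by
  obtain ⟨w, hw, he⟩ := h
  exact ⟨w, by simp only [Finsupp.add_apply]; omega,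
    fun w' hw' => by simp only [Finsupp.add_apply, he w' hw']⟩

lemma lexLt_of_add_right (hpo : IsStrictTotalOrder Pt po) {u v : Pt →₀ ℕ} (e : Pt →₀ ℕ)
    (h : lexLt po (u + e) (v + e)) : lexLt po u v := by
  have hne : u ≠ v := by
    rintro rfl; exact lexLt_irrefl _ h
  rcases lexLt_trichotomy hpo hne with h' | h'
  · exact h'
  · exact (lexLt_asymm hpo h (lexLt_add_right e h')).elim

end Infra

/-! ### Auxiliary machinery -/

/-- exponent vector of `x_s x_t` -/
noncomputable def m2 (s t : Pt) : Pt →₀ ℕ := Finsupp.single s 1 + Finsupp.single t 1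

section Infra2
variable {po : Pt → Pt → Prop}

lemma m2_apply (s t w : Pt) :
    m2 s t w = (if s = w then 1 else 0) + (if t = w then 1 else 0) := by
  simp [m2, Finsupp.single_apply]

lemma m2_comm (s t : Pt) : m2 s t = m2 t s := add_comm _ _

lemma lexLt_pair_aux (hpo : IsStrictTotalOrder Pt po) {s t x y : Pt}
    (hsx : s ≠ x) (htx : t ≠ x)
    (h1 : po s x) (h2 : po t x) (h3 : y = x ∨ po y x) :
    lexLt po (m2 s t) (m2 x y) := by
  haveI := hpo
  refine ⟨x, ?_, ?_⟩
  · rw [m2_apply, m2_apply]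
    simp [hsx, htx]
  · intro w' hw'
    have h4 : s ≠ w' := by rintro rfl; exact asymm_of po h1 hw'
    have h5 : t ≠ w' := by rintro rfl; exact asymm_of po h2 hw'
    have h7 : x ≠ w' := by rintro rfl; exact irrefl_of po x hw'
    have h6 : y ≠ w' := by
      rintro rfl
      rcases h3 with rfl | h3
      · exact irrefl_of po y hw'
      · exact asymm_of po h3 hw'
    rw [m2_apply, m2_apply]
    simp [h4, h5, h6, h7]

lemma lexLt_pair_half (hpo : IsStrictTotalOrder Pt po) {s t x y : Pt}
    (hsx : s ≠ x) (hsy : s ≠ y) (htx : t ≠ x) (hty : t ≠ y)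
    (h1 : po s x) (h2 : po t x) :
    lexLt po (m2 s t) (m2 x y) := by
  haveI := hpo
  rcases trichotomous_of po x y with h3 | h3 | h3
  · rw [m2_comm x y]
    exact lexLt_pair_aux hpo hsy hty (Trans.trans h1 h3) (Trans.trans h2 h3) (Or.inr h3)
  · exact lexLt_pair_aux hpo hsx htx h1 h2 (Or.inl h3.symm)
  · exact lexLt_pair_aux hpo hsx htx h1 h2 (Or.inr h3)

lemma lexLt_pair (hpo : IsStrictTotalOrder Pt po) {s t x y : Pt}
    (hsx : s ≠ x) (hsy : s ≠ y) (htx : t ≠ x) (hty : t ≠ y)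
    (h : (po s x ∧ po t x) ∨ (po s y ∧ po t y)) :
    lexLt po (m2 s t) (m2 x y) := by
  rcases h with ⟨h1, h2⟩ | ⟨h1, h2⟩
  · exact lexLt_pair_half hpo hsx hsy htx hty h1 h2
  · rw [m2_comm x y]
    exact lexLt_pair_half hpo hsy hsx hty htx h1 h2

lemma pair_lt_cases (hpo : IsStrictTotalOrder Pt po) {s t x y : Pt}
    (hsx : s ≠ x) (hsy : s ≠ y) (htx : t ≠ x) (hty : t ≠ y)
    (h : lexLt po (m2 s t) (m2 x y)) :
    (po s x ∧ po t x) ∨ (po s y ∧ po t y) := by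
  haveI := hpo
  obtain ⟨w, hw, he⟩ := h
  have hwxy : x = w ∨ y = w := by
    by_contra hc
    push_neg at hc
    rw [m2_apply, m2_apply, if_neg hc.1, if_neg hc.2] at hw
    omega
  have key : ∀ z : Pt, s = z ∨ t = z → z ≠ x → z ≠ y → z ≠ w → po z w := by
    intro z hz hzx hzy hzw
    rcases trichotomous_of po z w with h' | h' | h'
    · exact h'
    · exact absurd h' hzw
    · exfalso
      have := he z h'
      rw [m2_apply, m2_apply, if_neg (Ne.symm hzx), if_neg (Ne.symm hzy)] at this
      have hA : (if s = z then 1 else 0 : ℕ) = 0 ∧ (if t = z then 1 else 0 : ℕ) = 0 := by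
        omega
      rcases hz with rfl | rfl
      · rw [if_pos rfl] at hA; exact one_ne_zero hA.1
      · rw [if_pos rfl] at hA; exact one_ne_zero hA.2
  have hsw : po s w := key s (Or.inl rfl) hsx hsy (by rcases hwxy with rfl | rfl; exacts [hsx, hsy])
  have htw : po t w := key t (Or.inr rfl) htx hty (by rcases hwxy with rfl | rfl; exacts [htx, hty])
  rcases hwxy with rfl | rfl
  · exact Or.inl ⟨hsw, htw⟩
  · exact Or.inr ⟨hsw, htw⟩

end Infra2

section Infra3
variable {K : Type*} [Field K] {po : Pt → Pt → Prop}

lemma exists_rel_max {α : Type*} (r : α → α → Prop)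
    (htri : ∀ a b : α, a ≠ b → r a b ∨ r b a)
    (htrans : ∀ a b c : α, r a b → r b c → r a c) :
    ∀ s : Finset α, s.Nonempty → ∃ w ∈ s, ∀ w' ∈ s, w' = w ∨ r w' w := by
  classical
  intro s
  induction s using Finset.induction_on with
  | empty => rintro ⟨x, hx⟩; simp at hx
  | @insert a s ha ih =>
    intro _
    rcases s.eq_empty_or_nonempty with rfl | hs
    · exact ⟨a, by simp, by simp⟩
    · obtain ⟨w, hw, hmax⟩ := ih hs
      have haw : a ≠ w := fun h => ha (h ▸ hw)
      rcases htri a w haw with h | h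
      · refine ⟨w, Finset.mem_insert_of_mem hw, fun w' hw' => ?_⟩
        rcases Finset.mem_insert.1 hw' with rfl | hw'
        · exact Or.inr h
        · exact hmax w' hw'
      · refine ⟨a, Finset.mem_insert_self a s, fun w' hw' => ?_⟩
        rcases Finset.mem_insert.1 hw' with rfl | hw'
        · exact Or.inl rfl
        · rcases hmax w' hw' with rfl | h'
          · exact Or.inr h
          · exact Or.inr (htrans w' w a h' h)

lemma X_mul_X_eq (s t : Pt) : (X s * X t : MvPolynomial Pt K) = monomial (m2 s t) 1 := by
  rw [m2, X, X, monomial_mul, one_mul]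

lemma innerMinor_eq (s t : Pt) :
    innerMinor K s t
      = monomial (m2 s t) 1 + monomial (m2 (s.1, t.2) (t.1, s.2)) (-1) := by
  rw [innerMinor, X_mul_X_eq, X_mul_X_eq, sub_eq_add_neg]
  congr 1
  rw [← neg_one_mul (1 : K), ← C_mul_monomial, C_neg, C_1, neg_one_mul]

lemma coeff_binom_left {U V : Pt →₀ ℕ} (h : U ≠ V) (c1 c2 : K) :
    (monomial U c1 + monomial V c2).coeff U = c1 := by
  rw [coeff_add, coeff_monomial, coeff_monomial, if_pos rfl, if_neg h.symm, add_zero]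

lemma coeff_binom_right {U V : Pt →₀ ℕ} (h : U ≠ V) (c1 c2 : K) :
    (monomial U c1 + monomial V c2).coeff V = c2 := by
  rw [coeff_add, coeff_monomial, coeff_monomial, if_pos rfl, if_neg h, zero_add]

lemma coeff_binom_other {U V m : Pt →₀ ℕ} (hU : U ≠ m) (hV : V ≠ m) (c1 c2 : K) :
    (monomial U c1 + monomial V c2).coeff m = 0 := by
  rw [coeff_add, coeff_monomial, coeff_monomial, if_neg hU, if_neg hV, add_zero]

lemma support_binom {U V : Pt →₀ ℕ} (h : U ≠ V) {c1 c2 : K} (h1 : c1 ≠ 0) (h2 : c2 ≠ 0) :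
    (monomial U c1 + monomial V c2).support = {U, V} := by
  ext m
  rw [mem_support_iff, Finset.mem_insert, Finset.mem_singleton]
  constructor
  · intro hm
    by_contra hc
    push_neg at hc
    exact hm (coeff_binom_other (fun he => hc.1 he.symm) (fun he => hc.2 he.symm) c1 c2)
  · rintro (rfl | rfl)
    · rw [coeff_binom_left h]; exact h1
    · rw [coeff_binom_right h]; exact h2

lemma isLM_binom (hpo : IsStrictTotalOrder Pt po) {U V : Pt →₀ ℕ} {c1 c2 : K}
    (h : U ≠ V) (h1 : c1 ≠ 0) (h2 : c2 ≠ 0) (hlt : lexLt po V U) :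
    IsLM po (monomial U c1 + monomial V c2) U := by
  constructor
  · rw [support_binom h h1 h2]; simp
  · intro m' hm'
    rw [support_binom h h1 h2, Finset.mem_insert, Finset.mem_singleton] at hm'
    rcases hm' with rfl | rfl
    · exact Or.inl rfl
    · exact Or.inr hlt

lemma isLM_unique (hpo : IsStrictTotalOrder Pt po) {f : MvPolynomial Pt K} {m m' : Pt →₀ ℕ}
    (h : IsLM po f m) (h' : IsLM po f m') : m = m' := by
  rcases h.2 m' h'.1 with rfl | hlt
  · rfl
  · rcases h'.2 m h.1 with rfl | hlt'
    · rfl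
    · exact (lexLt_asymm hpo hlt hlt').elim

lemma exists_isLM (hpo : IsStrictTotalOrder Pt po) {f : MvPolynomial Pt K} (hf : f ≠ 0) :
    ∃ m, IsLM po f m := by
  obtain ⟨w, hw, hmax⟩ := exists_rel_max (lexLt po)
    (fun a b hab => lexLt_trichotomy hpo hab)
    (fun a b c hab hbc => lexLt_trans hpo hab hbc)
    f.support (by rwa [Finset.nonempty_iff_ne_empty, Ne, MvPolynomial.support_eq_empty])
  exact ⟨w, hw, hmax⟩

lemma lexLe_add (hpo : IsStrictTotalOrder Pt po) {u U v V : Pt →₀ ℕ}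
    (h1 : lexLe po u U) (h2 : lexLe po v V) : lexLe po (u + v) (U + V) := by
  rcases h1 with rfl | h1
  · rcases h2 with rfl | h2
    · exact Or.inl rfl
    · refine Or.inr ?_
      rw [add_comm u v, add_comm u V]
      exact lexLt_add_right u h2
  · rcases h2 with rfl | h2
    · exact Or.inr (lexLt_add_right v h1)
    · refine Or.inr (lexLt_trans hpo (lexLt_add_right v h1) ?_)
      rw [add_comm U v, add_comm U V]
      exact lexLt_add_right U h2

lemma isLM_mul (hpo : IsStrictTotalOrder Pt po) {q g : MvPolynomial Pt K} {Q Gm : Pt →₀ ℕ}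
    (hq : IsLM po q Q) (hg : IsLM po g Gm) : IsLM po (q * g) (Q + Gm) := by
  have hcoeff : (q * g).coeff (Q + Gm) = q.coeff Q * g.coeff Gm := by
    rw [coeff_mul]
    refine Finset.sum_eq_single_of_mem (Q, Gm) (Finset.HasAntidiagonal.mem_antidiagonal.2 rfl) ?_
    rintro ⟨m1, m2⟩ hmem hne
    have hsum : m1 + m2 = Q + Gm := Finset.HasAntidiagonal.mem_antidiagonal.1 hmem
    by_cases hm1 : q.coeff m1 = 0
    · rw [hm1, zero_mul]
    by_cases hm2 : g.coeff m2 = 0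
    · rw [hm2, mul_zero]
    exfalso
    have hle1 := hq.2 m1 (mem_support_iff.2 hm1)
    have hle2 := hg.2 m2 (mem_support_iff.2 hm2)
    rcases hle1 with rfl | hlt1
    · have : m2 = Gm := by
        have := hsum
        exact add_left_cancel this
      exact hne (by rw [this])
    · have hlt : lexLt po (m1 + m2) (Q + Gm) := by
        have step1 : lexLt po (m1 + m2) (Q + m2) := lexLt_add_right m2 hlt1
        rcases hle2 with rfl | hlt2
        · exact step1
        · refine lexLt_trans hpo step1 ?_
          rw [add_comm Q m2, add_comm Q Gm]
          exact lexLt_add_right Q hlt2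
      rw [hsum] at hlt
      exact lexLt_irrefl _ hlt
  constructor
  · rw [mem_support_iff, hcoeff]
    exact mul_ne_zero (mem_support_iff.1 hq.1) (mem_support_iff.1 hg.1)
  · intro m hm
    have hmem := MvPolynomial.support_mul q g hm
    rw [Finset.mem_add] at hmem
    obtain ⟨m1, hm1, m2, hm2, rfl⟩ := hmem
    exact lexLe_add hpo (hq.2 m1 hm1) (hg.2 m2 hm2)

lemma reduces_extract (hpo : IsStrictTotalOrder Pt po) {G : Set (MvPolynomial Pt K)}
    {sp : MvPolynomial Pt K} (hred : ReducesToZero po G sp) {M : Pt →₀ ℕ}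
    (hM : IsLM po sp M) :
    ∃ g ∈ G, ∃ Gm : Pt →₀ ℕ, IsLM po g Gm ∧ Gm ≤ M := by
  obtain ⟨F, q, hFG, hsum, hstd⟩ := hred
  have hco : sp.coeff M ≠ 0 := mem_support_iff.1 hM.1
  have : ∃ g ∈ F, (q g * g).coeff M ≠ 0 := by
    by_contra hc
    push_neg at hc
    apply hco
    rw [hsum, MvPolynomial.coeff_sum]
    exact Finset.sum_eq_zero hc
  obtain ⟨g, hgF, hgco⟩ := this
  have hg0 : g ≠ 0 := fun h => hgco (by rw [h, mul_zero, coeff_zero])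
  have hq0 : q g ≠ 0 := fun h => hgco (by rw [h, zero_mul, coeff_zero])
  obtain ⟨Q, hQ⟩ := exists_isLM hpo hq0
  obtain ⟨Gm, hGm⟩ := exists_isLM hpo hg0
  have hQG := isLM_mul hpo hQ hGm
  obtain ⟨mh, hmh, hle⟩ := hstd g hgF (Q + Gm) hQG
  have hmhM : mh = M := isLM_unique hpo hmh hM
  rw [hmhM] at hle
  have h1 : lexLe po M (Q + Gm) := hQG.2 M (mem_support_iff.2 hgco)
  have h2 : M = Q + Gm := by
    rcases h1 with h1 | h1
    · exact h1
    · rcases hle with h3 | h3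
      · exact h3.symm
      · exact (lexLt_asymm hpo h1 h3).elim
  refine ⟨g, hFG hgF, Gm, hGm, ?_⟩
  rw [h2]
  exact le_add_self

end Infra3

section Infra4
variable {po : Pt → Pt → Prop}

lemma mono3_apply (u v w w' : Pt) :
    mono3 u v w w' = (if u = w' then 1 else 0) + (if v = w' then 1 else 0)
      + (if w = w' then 1 else 0) := by
  simp [mono3, Finsupp.single_apply]

lemma mono3_eq_single_add_m2 (u v w : Pt) :
    mono3 u v w = Finsupp.single u 1 + m2 v w := by
  rw [mono3, m2, add_assoc]

lemma mono3_eq_m2_add_single (u v w : Pt) :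
    mono3 u v w = m2 u v + Finsupp.single w 1 := rfl

lemma m2_ne {s t x y : Pt} (hsx : s ≠ x) (hsy : s ≠ y) : m2 s t ≠ m2 x y := by
  intro h
  have hs := DFunLike.congr_fun h s
  rw [m2_apply, m2_apply, if_pos rfl, if_neg (Ne.symm hsx), if_neg (Ne.symm hsy)] at hs
  omega

lemma mono3_ne {u v w x y z : Pt} (hux : u ≠ x) (huy : u ≠ y) (huz : u ≠ z) :
    mono3 u v w ≠ mono3 x y z := by
  intro h
  have hs := DFunLike.congr_fun h u
  rw [mono3_apply, mono3_apply, if_pos rfl, if_neg (Ne.symm hux), if_neg (Ne.symm huy),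
    if_neg (Ne.symm huz)] at hs
  omega

lemma single_injective' {s t : Pt} (h : Finsupp.single s (1 : ℕ) = Finsupp.single t 1) :
    s = t := by
  have := DFunLike.congr_fun h s
  rw [Finsupp.single_apply, Finsupp.single_apply, if_pos rfl] at this
  by_cases hts : t = s
  · exact hts.symm
  · rw [if_neg hts] at this; omega

lemma m2_eq_cases {s t x y : Pt} (hst : s ≠ t) (h : m2 s t = m2 x y) :
    (s = x ∧ t = y) ∨ (s = y ∧ t = x) := by
  have hs := DFunLike.congr_fun h s
  rw [m2_apply, m2_apply, if_pos rfl, if_neg (Ne.symm hst)] at hs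
  by_cases hxs : x = s
  · left
    refine ⟨hxs.symm, ?_⟩
    rw [hxs, m2, m2] at h
    exact single_injective' (add_left_cancel h)
  · rw [if_neg hxs] at hs
    by_cases hys : y = s
    · right
      refine ⟨hys.symm, ?_⟩
      rw [hys, m2, m2, add_comm (Finsupp.single s 1) (Finsupp.single t 1)] at h
      exact single_injective' (add_right_cancel h)
    · rw [if_neg hys] at hs; omega

lemma m2_le_three {s t x y z : Pt} (hxy : x ≠ y) (hxz : x ≠ z) (hyz : y ≠ z)
    (h : m2 s t ≤ mono3 x y z) :
    s ≠ t ∧ (s = x ∨ s = y ∨ s = z) ∧ (t = x ∨ t = y ∨ t = z) := by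
  have hs := Finsupp.le_def.1 h s
  have ht := Finsupp.le_def.1 h t
  rw [m2_apply, mono3_apply, if_pos rfl] at hs
  rw [m2_apply, mono3_apply, if_pos rfl] at ht
  have hsm : s = x ∨ s = y ∨ s = z := by
    by_contra hc
    push_neg at hc
    rw [if_neg (Ne.symm hc.1), if_neg (Ne.symm hc.2.1), if_neg (Ne.symm hc.2.2)] at hs
    omega
  have htm : t = x ∨ t = y ∨ t = z := by
    by_contra hc
    push_neg at hc
    rw [if_neg (Ne.symm hc.1), if_neg (Ne.symm hc.2.1), if_neg (Ne.symm hc.2.2)] at ht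
    omega
  refine ⟨?_, hsm, htm⟩
  rintro rfl
  rw [if_pos rfl] at hs
  rcases hsm with rfl | rfl | rfl
  · rw [if_pos rfl, if_neg (Ne.symm hxy), if_neg (Ne.symm hxz)] at hs; omega
  · rw [if_pos rfl, if_neg hxy, if_neg (Ne.symm hyz)] at hs; omega
  · rw [if_pos rfl, if_neg hxz, if_neg hyz] at hs; omega

lemma sup_m2 {a b c : Pt} (hab : a ≠ b) (hac : a ≠ c) (hbc : b ≠ c) :
    m2 a b ⊔ m2 b c = mono3 a b c := by
  ext w
  rw [Finsupp.sup_apply, m2_apply, m2_apply, mono3_apply]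
  by_cases h1 : a = w <;> by_cases h2 : b = w <;> by_cases h3 : c = w <;>
    first
    | exact absurd (h1.trans h2.symm) hab
    | exact absurd (h1.trans h3.symm) hac
    | exact absurd (h2.trans h3.symm) hbc
    | (rw [if_pos h1, if_neg h2, if_neg h3] <;> omega)
    | (rw [if_neg h1, if_pos h2, if_neg h3] <;> omega)
    | (rw [if_neg h1, if_neg h2, if_pos h3] <;> omega)
    | (rw [if_neg h1, if_neg h2, if_neg h3] <;> omega)

lemma tsub_mono3_left {a b c : Pt} (hab : a ≠ b) (hac : a ≠ c) (hbc : b ≠ c) :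
    mono3 a b c - m2 a b = Finsupp.single c 1 := by
  ext w
  rw [Finsupp.tsub_apply, mono3_apply, m2_apply, Finsupp.single_apply]
  by_cases h1 : a = w <;> by_cases h2 : b = w <;> by_cases h3 : c = w <;>
    first
    | exact absurd (h1.trans h2.symm) hab
    | exact absurd (h1.trans h3.symm) hac
    | exact absurd (h2.trans h3.symm) hbc
    | (rw [if_pos h1, if_neg h2, if_neg h3] <;> omega)
    | (rw [if_neg h1, if_pos h2, if_neg h3] <;> omega)
    | (rw [if_neg h1, if_neg h2, if_pos h3] <;> omega)
    | (rw [if_neg h1, if_neg h2, if_neg h3] <;> omega)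

lemma tsub_mono3_right {a b c : Pt} (hab : a ≠ b) (hac : a ≠ c) (hbc : b ≠ c) :
    mono3 a b c - m2 b c = Finsupp.single a 1 := by
  ext w
  rw [Finsupp.tsub_apply, mono3_apply, m2_apply, Finsupp.single_apply]
  by_cases h1 : a = w <;> by_cases h2 : b = w <;> by_cases h3 : c = w <;>
    first
    | exact absurd (h1.trans h2.symm) hab
    | exact absurd (h1.trans h3.symm) hac
    | exact absurd (h2.trans h3.symm) hbc
    | (rw [if_pos h1, if_neg h2, if_neg h3] <;> omega)
    | (rw [if_neg h1, if_pos h2, if_neg h3] <;> omega)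
    | (rw [if_neg h1, if_neg h2, if_pos h3] <;> omega)
    | (rw [if_neg h1, if_neg h2, if_neg h3] <;> omega)

end Infra4

section Infra5
variable {K : Type*} [Field K] {po : Pt → Pt → Prop}

lemma reduces_pair (hpo : IsStrictTotalOrder Pt po) {G : Set (MvPolynomial Pt K)}
    {g1 g2 q1 q2 sp : MvPolynomial Pt K} {M : Pt →₀ ℕ}
    (hg1 : g1 ∈ G) (hg2 : g2 ∈ G) (hne : g1 ≠ g2)
    (hsum : sp = q1 * g1 + q2 * g2) (hM : IsLM po sp M)
    (h1 : ∀ m ∈ (q1 * g1).support, lexLe po m M)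
    (h2 : ∀ m ∈ (q2 * g2).support, lexLe po m M) :
    ReducesToZero po G sp := by
  classical
  refine ⟨{g1, g2}, fun g => if g = g1 then q1 else q2, ?_, ?_, ?_⟩
  · intro g hg
    simp only [Finset.coe_insert, Finset.coe_singleton, Set.mem_insert_iff,
      Set.mem_singleton_iff] at hg
    rcases hg with rfl | rfl
    · exact hg1
    · exact hg2
  · rw [Finset.sum_pair hne]
    have e1 : (fun g => if g = g1 then q1 else q2) g1 = q1 := by simp
    have e2 : (fun g => if g = g1 then q1 else q2) g2 = q2 := by simp [Ne.symm hne]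
    rw [e1, e2]
    exact hsum
  · intro g hg m hm
    rcases Finset.mem_insert.1 hg with rfl | hg'
    · have hm' : IsLM po (q1 * g) m := by simpa using hm
      exact ⟨M, hM, h1 m hm'.1⟩
    · rw [Finset.mem_singleton] at hg'
      subst hg'
      have hm' : IsLM po (q2 * g) m := by simpa [Ne.symm hne] using hm
      exact ⟨M, hM, h2 m hm'.1⟩

end Infra5

set_option maxHeartbeats 2000000

theorem sPoly_reducesToZero_iff_case2
    (K : Type*) [Field K] (P : Finset Pt) (hP : P.Nonempty)
    (i j k l n p : ℤ)
    (a b c d α β γ δ h r : Pt)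
    (ha : a = (i, j)) (hb : b = (k, l)) (hc : c = (i, l)) (hd : d = (k, j))
    (hα : α = (k, n)) (hβ : β = (p, l)) (hγ : γ = b) (hδ : δ = (p, n))
    (hh : h = (i, n)) (hr : r = (p, j))
    (hik : i < k) (hjn : j < n) (hnl : n < l) (hkp : k < p)
    (hab : IsInnerInterval P a b) (hαβ : IsInnerInterval P α β)
    (po : Pt → Pt → Prop) (hpo : IsStrictTotalOrder Pt po)
    (hgcd : ∃ mf mg : Pt →₀ ℕ, IsLM po (innerMinor K a b) mf ∧
      IsLM po (innerMinor K α β) mg ∧ ∃ w, 0 < mf w ∧ 0 < mg w) :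
    (∀ sp, IsSPoly po (innerMinor K a b) (innerMinor K α β) sp →
        ReducesToZero po (minorsSet K P) sp) ↔
      ((lexLt po (mono3 a α β) (mono3 δ c d) ∧
          ((po h c ∧ po β c) ∨ (po h δ ∧ po β δ))) ∨
       (lexLt po (mono3 a α β) (mono3 δ c d) ∧
          (∃ u v : Pt, IsInnerInterval P u v ∧ cornersOf u v = ({d, δ, α, r} : Finset Pt)) ∧
          ((po r δ ∧ po α δ) ∨ (po r d ∧ po α d))) ∨
       (lexLt po (mono3 δ c d) (mono3 a α β) ∧
          ((po h a ∧ po d a) ∨ (po h α ∧ po d α))) ∨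
       (lexLt po (mono3 δ c d) (mono3 a α β) ∧
          (∃ u v : Pt, IsInnerInterval P u v ∧ cornersOf u v = ({d, δ, α, r} : Finset Pt)) ∧
          ((po r a ∧ po c a) ∨ (po r β ∧ po c β)))) := by
  subst ha hb hc hd hα hβ hγ hδ hh hr
  haveI := hpo
  classical
  have PD : ∀ x1 y1 x2 y2 : ℤ, (x1 ≠ x2 ∨ y1 ≠ y2) → ((x1, y1) : Pt) ≠ ((x2, y2) : Pt) := by
    intro x1 y1 x2 y2 hd he
    rw [Prod.mk.injEq] at he
    tauto
  have hXmul : ∀ (u : Pt) (v : Pt →₀ ℕ) (c : K),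
      X u * monomial v c = monomial (Finsupp.single u 1 + v) c := by
    intro u v c
    rw [X, monomial_mul, one_mul]
  have hneg : ∀ v : Pt →₀ ℕ, (monomial v (-1 : K)) = -monomial v (1 : K) := by
    intro v
    exact map_neg _ 1
  set F1 := innerMinor K ((i, j) : Pt) ((k, l) : Pt) with hF1def
  set F2 := innerMinor K ((k, n) : Pt) ((p, l) : Pt) with hF2def
  have hf1 : F1 = monomial (m2 ((i,j) : Pt) ((k,l) : Pt)) 1
      + monomial (m2 ((i,l) : Pt) ((k,j) : Pt)) (-1) := innerMinor_eq _ _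
  have hf2 : F2 = monomial (m2 ((k,n) : Pt) ((p,l) : Pt)) 1
      + monomial (m2 ((k,l) : Pt) ((p,n) : Pt)) (-1) := innerMinor_eq _ _
  have hne1 : m2 ((i,j) : Pt) ((k,l) : Pt) ≠ m2 ((i,l) : Pt) ((k,j) : Pt) :=
    m2_ne (PD i j i l (by omega)) (PD i j k j (by omega))
  have hne2 : m2 ((k,n) : Pt) ((p,l) : Pt) ≠ m2 ((k,l) : Pt) ((p,n) : Pt) :=
    m2_ne (PD k n k l (by omega)) (PD k n p n (by omega))
  have hs1 : F1.support = {m2 ((i,j) : Pt) ((k,l) : Pt), m2 ((i,l) : Pt) ((k,j) : Pt)} := by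
    rw [hf1]; exact support_binom hne1 one_ne_zero (neg_ne_zero.2 one_ne_zero)
  have hs2 : F2.support = {m2 ((k,n) : Pt) ((p,l) : Pt), m2 ((k,l) : Pt) ((p,n) : Pt)} := by
    rw [hf2]; exact support_binom hne2 one_ne_zero (neg_ne_zero.2 one_ne_zero)
  have hLM12 : IsLM po F1 (m2 ((i,j) : Pt) ((k,l) : Pt))
      ∧ IsLM po F2 (m2 ((k,l) : Pt) ((p,n) : Pt)) := by
    obtain ⟨mf, mg, hmf, hmg, w, hwf, hwg⟩ := hgcd
    have hposmem : ∀ s t w' : Pt, 0 < m2 s t w' → w' = s ∨ w' = t := by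
      intro s t w' hpos
      rw [m2_apply] at hpos
      by_cases h1 : s = w'
      · exact Or.inl h1.symm
      · by_cases h2 : t = w'
        · exact Or.inr h2.symm
        · rw [if_neg h1, if_neg h2] at hpos; omega
    have hmf' := hmf.1
    have hmg' := hmg.1
    rw [hs1, Finset.mem_insert, Finset.mem_singleton] at hmf'
    rw [hs2, Finset.mem_insert, Finset.mem_singleton] at hmg'
    rcases hmf' with rfl | rfl <;> rcases hmg' with rfl | rfl
    · exfalso
      have hf' := hposmem _ _ w hwf
      have hg' := hposmem _ _ w hwg
      rcases hf' with rfl | rfl <;> rcases hg' with he | he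
      · exact PD i j k n (by omega) he
      · exact PD i j p l (by omega) he
      · exact PD k l k n (by omega) he
      · exact PD k l p l (by omega) he
    · exact ⟨hmf, hmg⟩
    · exfalso
      have hf' := hposmem _ _ w hwf
      have hg' := hposmem _ _ w hwg
      rcases hf' with rfl | rfl <;> rcases hg' with he | he
      · exact PD i l k n (by omega) he
      · exact PD i l p l (by omega) he
      · exact PD k j k n (by omega) he
      · exact PD k j p l (by omega) he
    · exfalso
      have hf' := hposmem _ _ w hwf
      have hg' := hposmem _ _ w hwg
      rcases hf' with rfl | rfl <;> rcases hg' with he | he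
      · exact PD i l k l (by omega) he
      · exact PD i l p n (by omega) he
      · exact PD k j k l (by omega) he
      · exact PD k j p n (by omega) he
  obtain ⟨hLM1, hLM2⟩ := hLM12
  set U := mono3 ((i,j) : Pt) ((k,n) : Pt) ((p,l) : Pt) with hUdef
  set V := mono3 ((p,n) : Pt) ((i,l) : Pt) ((k,j) : Pt) with hVdef
  have hUV : U ≠ V :=
    mono3_ne (PD i j p n (by omega)) (PD i j i l (by omega)) (PD i j k j (by omega))
  have hsup : m2 ((i,j) : Pt) ((k,l) : Pt) ⊔ m2 ((k,l) : Pt) ((p,n) : Pt)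
      = mono3 ((i,j) : Pt) ((k,l) : Pt) ((p,n) : Pt) :=
    sup_m2 (PD i j k l (by omega)) (PD i j p n (by omega)) (PD k l p n (by omega))
  have htsub1 : mono3 ((i,j) : Pt) ((k,l) : Pt) ((p,n) : Pt) - m2 ((i,j) : Pt) ((k,l) : Pt)
      = Finsupp.single ((p,n) : Pt) 1 :=
    tsub_mono3_left (PD i j k l (by omega)) (PD i j p n (by omega)) (PD k l p n (by omega))
  have htsub2 : mono3 ((i,j) : Pt) ((k,l) : Pt) ((p,n) : Pt) - m2 ((k,l) : Pt) ((p,n) : Pt)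
      = Finsupp.single ((i,j) : Pt) 1 :=
    tsub_mono3_right (PD i j k l (by omega)) (PD i j p n (by omega)) (PD k l p n (by omega))
  have hco1 : F1.coeff (m2 ((i,j) : Pt) ((k,l) : Pt)) = 1 := by
    rw [hf1]; exact coeff_binom_left hne1 _ _
  have hco2 : F2.coeff (m2 ((k,l) : Pt) ((p,n) : Pt)) = -1 := by
    rw [hf2]; exact coeff_binom_right hne2 _ _
  have hXdef : ∀ u : Pt, (X u : MvPolynomial Pt K) = monomial (Finsupp.single u 1) 1 :=
    fun u => rfl
  have hsp0 : X ((p,n) : Pt) * F1 + X ((i,j) : Pt) * F2 = monomial U 1 + monomial V (-1) := by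
    rw [hf1, hf2, mul_add, mul_add, hXmul, hXmul, hXmul, hXmul]
    have e1 : Finsupp.single ((p,n) : Pt) 1 + m2 ((i,j) : Pt) ((k,l) : Pt)
        = Finsupp.single ((i,j) : Pt) 1 + m2 ((k,l) : Pt) ((p,n) : Pt) := by
      rw [m2, m2]; abel
    have e2 : Finsupp.single ((p,n) : Pt) 1 + m2 ((i,l) : Pt) ((k,j) : Pt) = V := by
      rw [hVdef, mono3, m2]; abel
    have e3 : Finsupp.single ((i,j) : Pt) 1 + m2 ((k,n) : Pt) ((p,l) : Pt) = U := by
      rw [hUdef, mono3, m2]; abel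
    rw [e1, e2, e3]
    simp only [hneg]
    abel
  have hkey : monomial ((m2 ((i,j) : Pt) ((k,l) : Pt) ⊔ m2 ((k,l) : Pt) ((p,n) : Pt))
        - m2 ((i,j) : Pt) ((k,l) : Pt)) ((F1.coeff (m2 ((i,j) : Pt) ((k,l) : Pt)))⁻¹) * F1
      - monomial ((m2 ((i,j) : Pt) ((k,l) : Pt) ⊔ m2 ((k,l) : Pt) ((p,n) : Pt))
        - m2 ((k,l) : Pt) ((p,n) : Pt)) ((F2.coeff (m2 ((k,l) : Pt) ((p,n) : Pt)))⁻¹) * F2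
      = monomial U 1 + monomial V (-1) := by
    rw [hsup, htsub1, htsub2, hco1, hco2, inv_one,
      show ((-1 : K)⁻¹) = -1 by norm_num, hneg, ← hXdef, ← hXdef, ← hsp0]
    ring
  have hsp_unique : ∀ sp, IsSPoly po F1 F2 sp → sp = monomial U 1 + monomial V (-1) := by
    rintro sp ⟨mf, mg, hmf, hmg, rfl⟩
    obtain rfl : mf = m2 ((i,j) : Pt) ((k,l) : Pt) := isLM_unique hpo hmf hLM1
    obtain rfl : mg = m2 ((k,l) : Pt) ((p,n) : Pt) := isLM_unique hpo hmg hLM2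
    exact hkey
  have hspoly0 : IsSPoly po F1 F2 (monomial U 1 + monomial V (-1)) :=
    ⟨m2 ((i,j) : Pt) ((k,l) : Pt), m2 ((k,l) : Pt) ((p,n) : Pt), hLM1, hLM2, hkey.symm⟩
  constructor
  · intro hall
    have hred := hall _ hspoly0
    rcases lexLt_trichotomy hpo hUV with hUVlt | hVUlt
    · -- U < V : leading monomial is V, cases (1) or (2)
      have hM : IsLM po (monomial U (1:K) + monomial V (-1)) V := by
        rw [add_comm]
        exact isLM_binom hpo (Ne.symm hUV) (neg_ne_zero.2 one_ne_zero) one_ne_zero hUVlt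
      obtain ⟨g, hgG, Gm, hGm, hle⟩ := reduces_extract hpo hred hM
      obtain ⟨a', b', hab', rfl⟩ := hgG
      have hgeq : innerMinor K a' b' = monomial (m2 a' b') 1
          + monomial (m2 ((a'.1, b'.2) : Pt) ((b'.1, a'.2) : Pt)) (-1) := innerMinor_eq _ _
      have h1 := hab'.1
      have h2 := hab'.2.1
      have hm2ne : m2 a' b' ≠ m2 ((a'.1, b'.2) : Pt) ((b'.1, a'.2) : Pt) := by
        apply m2_ne
        · intro he; rw [Prod.ext_iff] at he; simp at he; omega
        · intro he; rw [Prod.ext_iff] at he; simp at he; omega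
      have hGm' := hGm.1
      rw [hgeq, support_binom hm2ne one_ne_zero (neg_ne_zero.2 one_ne_zero),
        Finset.mem_insert, Finset.mem_singleton] at hGm'
      rw [hVdef] at hle
      rcases hGm' with rfl | rfl
      · -- diagonal monomial is leading
        obtain ⟨hne', hma, hmb⟩ := m2_le_three (PD p n i l (by omega)) (PD p n k j (by omega))
          (PD i l k j (by omega)) hle
        rcases hma with rfl | rfl | rfl <;> rcases hmb with rfl | rfl | rfl <;>
          try (exfalso; simp at h1 h2 <;> omega)
        -- survivor : a' = (k,j), b' = (p,n) : case (2)
        refine Or.inr (Or.inl ⟨hUVlt, ⟨(k,j), (p,n), hab', by simp [cornersOf]⟩, ?_⟩)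
        have hother : lexLe po (m2 ((k,n) : Pt) ((p,j) : Pt)) (m2 ((k,j) : Pt) ((p,n) : Pt)) := by
          apply hGm.2
          rw [hgeq, support_binom hm2ne one_ne_zero (neg_ne_zero.2 one_ne_zero)]
          simp
        have hltp : lexLt po (m2 ((k,n) : Pt) ((p,j) : Pt)) (m2 ((k,j) : Pt) ((p,n) : Pt)) := by
          rcases hother with he | h
          · exact absurd he (m2_ne (PD k n k j (by omega)) (PD k n p n (by omega)))
          · exact h
        have hcs := pair_lt_cases hpo (PD k n k j (by omega)) (PD k n p n (by omega))
          (PD p j k j (by omega)) (PD p j p n (by omega)) hltp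
        tauto
      · -- antidiagonal monomial is leading
        obtain ⟨hne', hmc, hmd⟩ := m2_le_three (PD p n i l (by omega)) (PD p n k j (by omega))
          (PD i l k j (by omega)) hle
        rcases hmc with hc' | hc' | hc' <;> rcases hmd with hd' | hd' | hd' <;>
          rw [Prod.mk.injEq] at hc' hd' <;>
          try (exfalso; omega)
        -- survivor 1 : c' = (i,l), d' = (p,n) : case (1)
        · have ha' : a' = ((i,n) : Pt) := Prod.ext hc'.1 hd'.2
          have hb' : b' = ((p,l) : Pt) := Prod.ext hd'.1 hc'.2
          subst ha' hb'
          refine Or.inl ⟨hUVlt, ?_⟩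
          have hother : lexLe po (m2 ((i,n) : Pt) ((p,l) : Pt)) (m2 ((i,l) : Pt) ((p,n) : Pt)) := by
            apply hGm.2
            rw [hgeq, support_binom hm2ne one_ne_zero (neg_ne_zero.2 one_ne_zero)]
            simp
          have hltp : lexLt po (m2 ((i,n) : Pt) ((p,l) : Pt)) (m2 ((i,l) : Pt) ((p,n) : Pt)) := by
            rcases hother with he | h
            · exact absurd he (m2_ne (PD i n i l (by omega)) (PD i n p n (by omega)))
            · exact h
          exact pair_lt_cases hpo (PD i n i l (by omega)) (PD i n p n (by omega))
            (PD p l i l (by omega)) (PD p l p n (by omega)) hltp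
        -- survivor 2 : c' = (i,l), d' = (k,j) : contradiction with LM of F1
        · exfalso
          have ha' : a' = ((i,j) : Pt) := Prod.ext hc'.1 hd'.2
          have hb' : b' = ((k,l) : Pt) := Prod.ext hd'.1 hc'.2
          subst ha' hb'
          have heq : m2 ((i,l) : Pt) ((k,j) : Pt) = m2 ((i,j) : Pt) ((k,l) : Pt) :=
            isLM_unique hpo hGm hLM1
          exact m2_ne (PD i l i j (by omega)) (PD i l k l (by omega)) heq
    · -- V < U : leading monomial is U, cases (3) or (4)
      have hM : IsLM po (monomial U (1:K) + monomial V (-1)) U :=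
        isLM_binom hpo hUV one_ne_zero (neg_ne_zero.2 one_ne_zero) hVUlt
      obtain ⟨g, hgG, Gm, hGm, hle⟩ := reduces_extract hpo hred hM
      obtain ⟨a', b', hab', rfl⟩ := hgG
      have hgeq : innerMinor K a' b' = monomial (m2 a' b') 1
          + monomial (m2 ((a'.1, b'.2) : Pt) ((b'.1, a'.2) : Pt)) (-1) := innerMinor_eq _ _
      have h1 := hab'.1
      have h2 := hab'.2.1
      have hm2ne : m2 a' b' ≠ m2 ((a'.1, b'.2) : Pt) ((b'.1, a'.2) : Pt) := by
        apply m2_ne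
        · intro he; rw [Prod.ext_iff] at he; simp at he; omega
        · intro he; rw [Prod.ext_iff] at he; simp at he; omega
      have hGm' := hGm.1
      rw [hgeq, support_binom hm2ne one_ne_zero (neg_ne_zero.2 one_ne_zero),
        Finset.mem_insert, Finset.mem_singleton] at hGm'
      rw [hUdef] at hle
      rcases hGm' with rfl | rfl
      · -- diagonal monomial is leading
        obtain ⟨hne', hma, hmb⟩ := m2_le_three (PD i j k n (by omega)) (PD i j p l (by omega))
          (PD k n p l (by omega)) hle
        rcases hma with rfl | rfl | rfl <;> rcases hmb with rfl | rfl | rfl <;>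
          try (exfalso; simp at h1 h2 <;> omega)
        -- survivor 1 : a' = (i,j), b' = (k,n) : case (3)
        · refine Or.inr (Or.inr (Or.inl ⟨hVUlt, ?_⟩))
          have hother : lexLe po (m2 ((i,n) : Pt) ((k,j) : Pt)) (m2 ((i,j) : Pt) ((k,n) : Pt)) := by
            apply hGm.2
            rw [hgeq, support_binom hm2ne one_ne_zero (neg_ne_zero.2 one_ne_zero)]
            simp
          have hltp : lexLt po (m2 ((i,n) : Pt) ((k,j) : Pt)) (m2 ((i,j) : Pt) ((k,n) : Pt)) := by
            rcases hother with he | h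
            · exact absurd he (m2_ne (PD i n i j (by omega)) (PD i n k n (by omega)))
            · exact h
          exact pair_lt_cases hpo (PD i n i j (by omega)) (PD i n k n (by omega))
            (PD k j i j (by omega)) (PD k j k n (by omega)) hltp
        -- survivor 2 : a' = (i,j), b' = (p,l) : case (4)
        · have hDDE : IsInnerInterval P ((k,j) : Pt) ((p,n) : Pt) := by
            refine ⟨hkp, hjn, ?_⟩
            intro c hh1 hh2 hh3 hh4
            have hh1' : k ≤ c.1 := hh1
            have hh2' : c.1 < p := hh2
            have hh3' : j ≤ c.2 := hh3
            have hh4' : c.2 < n := hh4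
            exact hab'.2.2 c (show (i:ℤ) ≤ c.1 by omega) hh2' hh3' (show c.2 < l by omega)
          refine Or.inr (Or.inr (Or.inr ⟨hVUlt, ⟨(k,j), (p,n), hDDE, by simp [cornersOf]⟩, ?_⟩))
          have hother : lexLe po (m2 ((i,l) : Pt) ((p,j) : Pt)) (m2 ((i,j) : Pt) ((p,l) : Pt)) := by
            apply hGm.2
            rw [hgeq, support_binom hm2ne one_ne_zero (neg_ne_zero.2 one_ne_zero)]
            simp
          have hltp : lexLt po (m2 ((i,l) : Pt) ((p,j) : Pt)) (m2 ((i,j) : Pt) ((p,l) : Pt)) := by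
            rcases hother with he | h
            · exact absurd he (m2_ne (PD i l i j (by omega)) (PD i l p l (by omega)))
            · exact h
          have hcs := pair_lt_cases hpo (PD i l i j (by omega)) (PD i l p l (by omega))
            (PD p j i j (by omega)) (PD p j p l (by omega)) hltp
          tauto
        -- survivor 3 : a' = (k,n), b' = (p,l) : contradiction with LM of F2
        · exfalso
          have heq : m2 ((k,n) : Pt) ((p,l) : Pt) = m2 ((k,l) : Pt) ((p,n) : Pt) :=
            isLM_unique hpo hGm hLM2
          exact m2_ne (PD k n k l (by omega)) (PD k n p n (by omega)) heq
      · -- antidiagonal monomial is leading : impossible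
        exfalso
        obtain ⟨hne', hmc, hmd⟩ := m2_le_three (PD i j k n (by omega)) (PD i j p l (by omega))
          (PD k n p l (by omega)) hle
        rcases hmc with hc' | hc' | hc' <;> rcases hmd with hd' | hd' | hd' <;>
          rw [Prod.mk.injEq] at hc' hd' <;> omega

  · intro hrhs sp hsp
    rw [hsp_unique sp hsp]
    have hAAL : IsInnerInterval P ((i,j) : Pt) ((k,n) : Pt) := by
      refine ⟨hik, hjn, ?_⟩
      intro c h1 h2 h3 h4
      have h1' : i ≤ c.1 := h1
      have h2' : c.1 < k := h2
      have h3' : j ≤ c.2 := h3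
      have h4' : c.2 < n := h4
      exact hab.2.2 c h1' h2' h3' (by omega)
    have hHBE : IsInnerInterval P ((i,n) : Pt) ((p,l) : Pt) := by
      refine ⟨show (i:ℤ) < p by omega, hnl, ?_⟩
      intro c h1 h2 h3 h4
      have h1' : i ≤ c.1 := h1
      have h2' : c.1 < p := h2
      have h3' : n ≤ c.2 := h3
      have h4' : c.2 < l := h4
      by_cases hck : c.1 < k
      · exact hab.2.2 c h1' hck (by omega) h4'
      · exact hαβ.2.2 c (by omega) h2' h3' h4'
    set W1 := mono3 ((i,n) : Pt) ((k,j) : Pt) ((p,l) : Pt) with hW1def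
    set W2 := mono3 ((i,l) : Pt) ((k,n) : Pt) ((p,j) : Pt) with hW2def
    have hg1eq : innerMinor K ((i,j) : Pt) ((k,n) : Pt)
        = monomial (m2 ((i,j) : Pt) ((k,n) : Pt)) 1
          + monomial (m2 ((i,n) : Pt) ((k,j) : Pt)) (-1) := innerMinor_eq _ _
    have hg2eq : innerMinor K ((i,n) : Pt) ((p,l) : Pt)
        = monomial (m2 ((i,n) : Pt) ((p,l) : Pt)) 1
          + monomial (m2 ((i,l) : Pt) ((p,n) : Pt)) (-1) := innerMinor_eq _ _
    have hg3eq : innerMinor K ((i,j) : Pt) ((p,l) : Pt)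
        = monomial (m2 ((i,j) : Pt) ((p,l) : Pt)) 1
          + monomial (m2 ((i,l) : Pt) ((p,j) : Pt)) (-1) := innerMinor_eq _ _
    have hg4eq : innerMinor K ((k,j) : Pt) ((p,n) : Pt)
        = monomial (m2 ((k,j) : Pt) ((p,n) : Pt)) 1
          + monomial (m2 ((k,n) : Pt) ((p,j) : Pt)) (-1) := innerMinor_eq _ _
    have hq1 : X ((p,l) : Pt) * innerMinor K ((i,j) : Pt) ((k,n) : Pt)
        = monomial U 1 + monomial W1 (-1) := by
      rw [hg1eq, mul_add, hXmul, hXmul,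
        show Finsupp.single ((p,l) : Pt) 1 + m2 ((i,j) : Pt) ((k,n) : Pt) = U by
          rw [hUdef, mono3, m2]; abel,
        show Finsupp.single ((p,l) : Pt) 1 + m2 ((i,n) : Pt) ((k,j) : Pt) = W1 by
          rw [hW1def, mono3, m2]; abel]
    have hq2 : X ((k,j) : Pt) * innerMinor K ((i,n) : Pt) ((p,l) : Pt)
        = monomial W1 1 + monomial V (-1) := by
      rw [hg2eq, mul_add, hXmul, hXmul,
        show Finsupp.single ((k,j) : Pt) 1 + m2 ((i,n) : Pt) ((p,l) : Pt) = W1 by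
          rw [hW1def, mono3, m2]; abel,
        show Finsupp.single ((k,j) : Pt) 1 + m2 ((i,l) : Pt) ((p,n) : Pt) = V by
          rw [hVdef, mono3, m2]; abel]
    have hq3 : X ((k,n) : Pt) * innerMinor K ((i,j) : Pt) ((p,l) : Pt)
        = monomial U 1 + monomial W2 (-1) := by
      rw [hg3eq, mul_add, hXmul, hXmul,
        show Finsupp.single ((k,n) : Pt) 1 + m2 ((i,j) : Pt) ((p,l) : Pt) = U by
          rw [hUdef, mono3, m2]; abel,
        show Finsupp.single ((k,n) : Pt) 1 + m2 ((i,l) : Pt) ((p,j) : Pt) = W2 by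
          rw [hW2def, mono3, m2]; abel]
    have hq4 : (-X ((i,l) : Pt)) * innerMinor K ((k,j) : Pt) ((p,n) : Pt)
        = monomial W2 1 + monomial V (-1) := by
      rw [neg_mul, hg4eq, mul_add, hXmul, hXmul,
        show Finsupp.single ((i,l) : Pt) 1 + m2 ((k,j) : Pt) ((p,n) : Pt) = V by
          rw [hVdef, mono3, m2]; abel,
        show Finsupp.single ((i,l) : Pt) 1 + m2 ((k,n) : Pt) ((p,j) : Pt) = W2 by
          rw [hW2def, mono3, m2]; abel]
      simp only [hneg]
      abel
    have hUW1 : U ≠ W1 :=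
      mono3_ne (PD i j i n (by omega)) (PD i j k j (by omega)) (PD i j p l (by omega))
    have hW1V : W1 ≠ V :=
      mono3_ne (PD i n p n (by omega)) (PD i n i l (by omega)) (PD i n k j (by omega))
    have hUW2 : U ≠ W2 :=
      mono3_ne (PD i j i l (by omega)) (PD i j k n (by omega)) (PD i j p j (by omega))
    have hW2V : W2 ≠ V :=
      (mono3_ne (PD p n i l (by omega)) (PD p n k n (by omega)) (PD p n p j (by omega))).symm
    have hid13 : monomial U (1 : K) + monomial V (-1)
        = X ((p,l) : Pt) * innerMinor K ((i,j) : Pt) ((k,n) : Pt)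
          + X ((k,j) : Pt) * innerMinor K ((i,n) : Pt) ((p,l) : Pt) := by
      rw [hq1, hq2]; simp only [hneg]; abel
    have hid24 : monomial U (1 : K) + monomial V (-1)
        = X ((k,n) : Pt) * innerMinor K ((i,j) : Pt) ((p,l) : Pt)
          + (-X ((i,l) : Pt)) * innerMinor K ((k,j) : Pt) ((p,n) : Pt) := by
      rw [hq3, hq4]; simp only [hneg]; abel
    have hg12ne : innerMinor K ((i,j) : Pt) ((k,n) : Pt)
        ≠ innerMinor K ((i,n) : Pt) ((p,l) : Pt) := by
      intro heq
      have hc := congrArg (MvPolynomial.coeff (m2 ((i,j) : Pt) ((k,n) : Pt))) heq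
      rw [hg1eq, hg2eq,
        coeff_binom_left (m2_ne (PD i j i n (by omega)) (PD i j k j (by omega))) _ _,
        coeff_binom_other (m2_ne (PD i n i j (by omega)) (PD i n k n (by omega)))
          (m2_ne (PD i l i j (by omega)) (PD i l k n (by omega))) _ _] at hc
      exact one_ne_zero hc
    have hg34ne : innerMinor K ((i,j) : Pt) ((p,l) : Pt)
        ≠ innerMinor K ((k,j) : Pt) ((p,n) : Pt) := by
      intro heq
      have hc := congrArg (MvPolynomial.coeff (m2 ((i,j) : Pt) ((p,l) : Pt))) heq
      rw [hg3eq, hg4eq,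
        coeff_binom_left (m2_ne (PD i j i l (by omega)) (PD i j p j (by omega))) _ _,
        coeff_binom_other (m2_ne (PD k j i j (by omega)) (PD k j p l (by omega)))
          (m2_ne (PD k n i j (by omega)) (PD k n p l (by omega))) _ _] at hc
      exact one_ne_zero hc
    rcases hrhs with ⟨hlt, hcond⟩ | ⟨hlt, hint, hcond⟩ | ⟨hlt, hcond⟩ | ⟨hlt, hint, hcond⟩
    · -- case 1 : M = V, pair (g1, g2)
      have hM : IsLM po (monomial U (1:K) + monomial V (-1)) V := by
        rw [add_comm]
        exact isLM_binom hpo (Ne.symm hUV) (neg_ne_zero.2 one_ne_zero) one_ne_zero hlt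
      have hW1ltV : lexLt po W1 V := by
        rw [show W1 = m2 ((i,n) : Pt) ((p,l) : Pt) + Finsupp.single ((k,j) : Pt) 1 by
            rw [hW1def, mono3, m2]; abel,
          show V = m2 ((i,l) : Pt) ((p,n) : Pt) + Finsupp.single ((k,j) : Pt) 1 by
            rw [hVdef, mono3, m2]; abel]
        exact lexLt_add_right _ (lexLt_pair hpo (PD i n i l (by omega)) (PD i n p n (by omega))
          (PD p l i l (by omega)) (PD p l p n (by omega)) hcond)
      refine reduces_pair hpo ⟨(i,j), (k,n), hAAL, rfl⟩ ⟨(i,n), (p,l), hHBE, rfl⟩ hg12ne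
        hid13 hM ?_ ?_
      · intro m hm
        rw [hq1, support_binom hUW1 one_ne_zero (neg_ne_zero.2 one_ne_zero),
          Finset.mem_insert, Finset.mem_singleton] at hm
        rcases hm with rfl | rfl
        · exact Or.inr hlt
        · exact Or.inr hW1ltV
      · intro m hm
        rw [hq2, support_binom hW1V one_ne_zero (neg_ne_zero.2 one_ne_zero),
          Finset.mem_insert, Finset.mem_singleton] at hm
        rcases hm with rfl | rfl
        · exact Or.inr hW1ltV
        · exact Or.inl rfl
    · -- case 2 : M = V, pair (g3, g4), with inner interval [d, δ]
      obtain ⟨u, v, huv, hcor⟩ := hint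
      have hu : u ∈ ({((k,j) : Pt), ((p,n) : Pt), ((k,n) : Pt), ((p,j) : Pt)} : Finset Pt) := by
        rw [← hcor]; simp [cornersOf]
      have hv : v ∈ ({((k,j) : Pt), ((p,n) : Pt), ((k,n) : Pt), ((p,j) : Pt)} : Finset Pt) := by
        rw [← hcor]; simp [cornersOf]
      have h1 := huv.1
      have h2 := huv.2.1
      rw [Finset.mem_insert, Finset.mem_insert, Finset.mem_insert, Finset.mem_singleton] at hu hv
      have hDDE : IsInnerInterval P ((k,j) : Pt) ((p,n) : Pt) := by
        rcases hu with rfl | rfl | rfl | rfl <;> rcases hv with rfl | rfl | rfl | rfl <;>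
          first
            | exact huv
            | (exfalso; simp only [Prod.fst, Prod.snd] at h1 h2 <;> omega)
      have hABE : IsInnerInterval P ((i,j) : Pt) ((p,l) : Pt) := by
        refine ⟨show (i:ℤ) < p by omega, show (j:ℤ) < l by omega, ?_⟩
        intro c h1 h2 h3 h4
        have h1' : i ≤ c.1 := h1
        have h2' : c.1 < p := h2
        have h3' : j ≤ c.2 := h3
        have h4' : c.2 < l := h4
        by_cases hck : c.1 < k
        · exact hab.2.2 c h1' hck h3' h4'
        · by_cases hcn : c.2 < n
          · exact hDDE.2.2 c (show (k:ℤ) ≤ c.1 by omega) h2' h3' hcn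
          · exact hαβ.2.2 c (show (k:ℤ) ≤ c.1 by omega) h2' (show (n:ℤ) ≤ c.2 by omega) h4'
      have hM : IsLM po (monomial U (1:K) + monomial V (-1)) V := by
        rw [add_comm]
        exact isLM_binom hpo (Ne.symm hUV) (neg_ne_zero.2 one_ne_zero) one_ne_zero hlt
      have hW2ltV : lexLt po W2 V := by
        rw [show W2 = m2 ((k,n) : Pt) ((p,j) : Pt) + Finsupp.single ((i,l) : Pt) 1 by
            rw [hW2def, mono3, m2]; abel,
          show V = m2 ((k,j) : Pt) ((p,n) : Pt) + Finsupp.single ((i,l) : Pt) 1 by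
            rw [hVdef, mono3, m2]; abel]
        refine lexLt_add_right _ (lexLt_pair hpo (PD k n k j (by omega)) (PD k n p n (by omega))
          (PD p j k j (by omega)) (PD p j p n (by omega)) ?_)
        rcases hcond with ⟨hx, hy⟩ | ⟨hx, hy⟩
        · exact Or.inr ⟨hy, hx⟩
        · exact Or.inl ⟨hy, hx⟩
      refine reduces_pair hpo ⟨(i,j), (p,l), hABE, rfl⟩ ⟨(k,j), (p,n), hDDE, rfl⟩ hg34ne
        hid24 hM ?_ ?_
      · intro m hm
        rw [hq3, support_binom hUW2 one_ne_zero (neg_ne_zero.2 one_ne_zero),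
          Finset.mem_insert, Finset.mem_singleton] at hm
        rcases hm with rfl | rfl
        · exact Or.inr hlt
        · exact Or.inr hW2ltV
      · intro m hm
        rw [hq4, support_binom hW2V one_ne_zero (neg_ne_zero.2 one_ne_zero),
          Finset.mem_insert, Finset.mem_singleton] at hm
        rcases hm with rfl | rfl
        · exact Or.inr hW2ltV
        · exact Or.inl rfl
    · -- case 3 : M = U, pair (g1, g2)
      have hM : IsLM po (monomial U (1:K) + monomial V (-1)) U :=
        isLM_binom hpo hUV one_ne_zero (neg_ne_zero.2 one_ne_zero) hlt
      have hW1ltU : lexLt po W1 U := by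
        rw [show W1 = m2 ((i,n) : Pt) ((k,j) : Pt) + Finsupp.single ((p,l) : Pt) 1 from rfl,
          show U = m2 ((i,j) : Pt) ((k,n) : Pt) + Finsupp.single ((p,l) : Pt) 1 from rfl]
        exact lexLt_add_right _ (lexLt_pair hpo (PD i n i j (by omega)) (PD i n k n (by omega))
          (PD k j i j (by omega)) (PD k j k n (by omega)) hcond)
      refine reduces_pair hpo ⟨(i,j), (k,n), hAAL, rfl⟩ ⟨(i,n), (p,l), hHBE, rfl⟩ hg12ne
        hid13 hM ?_ ?_
      · intro m hm
        rw [hq1, support_binom hUW1 one_ne_zero (neg_ne_zero.2 one_ne_zero),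
          Finset.mem_insert, Finset.mem_singleton] at hm
        rcases hm with rfl | rfl
        · exact Or.inl rfl
        · exact Or.inr hW1ltU
      · intro m hm
        rw [hq2, support_binom hW1V one_ne_zero (neg_ne_zero.2 one_ne_zero),
          Finset.mem_insert, Finset.mem_singleton] at hm
        rcases hm with rfl | rfl
        · exact Or.inr hW1ltU
        · exact Or.inr hlt
    · -- case 4 : M = U, pair (g3, g4)
      obtain ⟨u, v, huv, hcor⟩ := hint
      have hu : u ∈ ({((k,j) : Pt), ((p,n) : Pt), ((k,n) : Pt), ((p,j) : Pt)} : Finset Pt) := by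
        rw [← hcor]; simp [cornersOf]
      have hv : v ∈ ({((k,j) : Pt), ((p,n) : Pt), ((k,n) : Pt), ((p,j) : Pt)} : Finset Pt) := by
        rw [← hcor]; simp [cornersOf]
      have h1 := huv.1
      have h2 := huv.2.1
      rw [Finset.mem_insert, Finset.mem_insert, Finset.mem_insert, Finset.mem_singleton] at hu hv
      have hDDE : IsInnerInterval P ((k,j) : Pt) ((p,n) : Pt) := by
        rcases hu with rfl | rfl | rfl | rfl <;> rcases hv with rfl | rfl | rfl | rfl <;>
          first
            | exact huv
            | (exfalso; simp only [Prod.fst, Prod.snd] at h1 h2 <;> omega)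
      have hABE : IsInnerInterval P ((i,j) : Pt) ((p,l) : Pt) := by
        refine ⟨show (i:ℤ) < p by omega, show (j:ℤ) < l by omega, ?_⟩
        intro c h1 h2 h3 h4
        have h1' : i ≤ c.1 := h1
        have h2' : c.1 < p := h2
        have h3' : j ≤ c.2 := h3
        have h4' : c.2 < l := h4
        by_cases hck : c.1 < k
        · exact hab.2.2 c h1' hck h3' h4'
        · by_cases hcn : c.2 < n
          · exact hDDE.2.2 c (show (k:ℤ) ≤ c.1 by omega) h2' h3' hcn
          · exact hαβ.2.2 c (show (k:ℤ) ≤ c.1 by omega) h2' (show (n:ℤ) ≤ c.2 by omega) h4'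
      have hM : IsLM po (monomial U (1:K) + monomial V (-1)) U :=
        isLM_binom hpo hUV one_ne_zero (neg_ne_zero.2 one_ne_zero) hlt
      have hW2ltU : lexLt po W2 U := by
        rw [show W2 = m2 ((i,l) : Pt) ((p,j) : Pt) + Finsupp.single ((k,n) : Pt) 1 by
            rw [hW2def, mono3, m2]; abel,
          show U = m2 ((i,j) : Pt) ((p,l) : Pt) + Finsupp.single ((k,n) : Pt) 1 by
            rw [hUdef, mono3, m2]; abel]
        refine lexLt_add_right _ (lexLt_pair hpo (PD i l i j (by omega)) (PD i l p l (by omega))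
          (PD p j i j (by omega)) (PD p j p l (by omega)) ?_)
        rcases hcond with ⟨hx, hy⟩ | ⟨hx, hy⟩
        · exact Or.inl ⟨hy, hx⟩
        · exact Or.inr ⟨hy, hx⟩
      refine reduces_pair hpo ⟨(i,j), (p,l), hABE, rfl⟩ ⟨(k,j), (p,n), hDDE, rfl⟩ hg34ne
        hid24 hM ?_ ?_
      · intro m hm
        rw [hq3, support_binom hUW2 one_ne_zero (neg_ne_zero.2 one_ne_zero),
          Finset.mem_insert, Finset.mem_singleton] at hm
        rcases hm with rfl | rfl
        · exact Or.inl rfl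
        · exact Or.inr hW2ltU
      · intro m hm
        rw [hq4, support_binom hW2V one_ne_zero (neg_ne_zero.2 one_ne_zero),
          Finset.mem_insert, Finset.mem_singleton] at hm
        rcases hm with rfl | rfl
        · exact Or.inr hW2ltU
        · exact Or.inr hlt


end ClosedPathPaper
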